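/- Let {(A_i, B_i)}_{i=1}^m be pairs of finite sets such that A_i ∩ B_i = ∅ for all i, and A_i ∩ B_j ≠ ∅ for all i ≠ j. Then ∑_{i=1}^m 1/C(|A_i|+|B_i|, |A_i|) ≤ 1. -/

import Mathlib

open Finset

private lemma bollobas_key (a b : ℕ) (hb : 1 ≤ b) :
    (b : ℝ) / ((a + (b - 1)).choose a : ℝ) = ((a : ℝ) + b) / ((a + b).choose a : ℝ) := by
  obtain ⟨c, rfl⟩ := Nat.exists_eq_add_of_le hb
  have h1 : (1 + c - 1) = c := by omega
  rw [h1]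
  have hnat : (1 + c) * ((a + (1 + c)).choose a) = (a + (1 + c)) * ((a + c).choose a) := by
    have e : 1 + c = c + 1 := Nat.add_comm 1 c
    rw [e, Nat.choose_symm_add, Nat.choose_symm_add]
    have e2 : a + (c + 1) = (a + c) + 1 := by omega
    rw [e2]
    have h3 := Nat.add_one_mul_choose_eq (a + c) c
    rw [h3]
    ring
  have hp1 : (0 : ℝ) < ((a + c).choose a : ℝ) := by
    exact_mod_cast Nat.choose_pos (Nat.le_add_right a c)
  have hp2 : (0 : ℝ) < ((a + (1 + c)).choose a : ℝ) := by
    exact_mod_cast Nat.choose_pos (Nat.le_add_right a (1 + c))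
  rw [div_eq_div_iff hp1.ne' hp2.ne']
  exact_mod_cast hnat

private lemma bollobas_aux {α : Type*} [DecidableEq α] (m : ℕ) :
    ∀ n (X : Finset α), X.card = n → ∀ (A B : Fin m → Finset α) (s : Finset (Fin m)),
    (∀ i ∈ s, A i ∪ B i ⊆ X) → (∀ i ∈ s, A i ∩ B i = ∅) →
    (∀ i ∈ s, ∀ j ∈ s, i ≠ j → (A i ∩ B j).Nonempty) →
    ∑ i ∈ s, (1 : ℝ) / (((A i).card + (B i).card).choose (A i).card : ℝ) ≤ 1 := by
  intro n
  induction n using Nat.strong_induction_on with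
  | _ n ih =>
    intro X hX A B s hsub hdisj hcross
    rcases s.eq_empty_or_nonempty with rfl | ⟨i₀, hi₀⟩
    · simp
    by_cases hBe : ∃ i ∈ s, B i = ∅
    · -- some B i is empty, then s = {i}
      obtain ⟨i, his, hBi⟩ := hBe
      have hs : s = {i} := by
        apply Finset.eq_singleton_iff_unique_mem.2
        refine ⟨his, fun j hjs => ?_⟩
        by_contra hji
        obtain ⟨x, hx⟩ := hcross j hjs i his hji
        rw [hBi] at hx
        simp at hx
      rw [hs]
      simp [hBi, Nat.choose_self]
    push_neg at hBe
    -- all B i nonempty for i ∈ s, hence X nonempty, n ≥ 1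
    have hXne : (B i₀).Nonempty := hBe i₀ hi₀
    obtain ⟨x₀, hx₀⟩ := hXne
    have hx₀X : x₀ ∈ X := hsub i₀ hi₀ (Finset.mem_union_right _ hx₀)
    have hn : 1 ≤ n := by
      rw [← hX]; exact Finset.card_pos.2 ⟨x₀, hx₀X⟩
    -- per-x inequality from induction hypothesis
    have hper : ∀ x ∈ X,
        ∑ i ∈ s.filter (fun i => x ∉ A i),
          (1 : ℝ) / (((A i).card + ((B i).erase x).card).choose (A i).card : ℝ) ≤ 1 := by
      intro x hxX
      apply ih (n - 1) (by omega) (X.erase x) (by rw [Finset.card_erase_of_mem hxX, hX])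
        A (fun i => (B i).erase x)
      · intro i hi
        rw [Finset.mem_filter] at hi
        intro y hy
        rw [Finset.mem_union] at hy
        rcases hy with hy | hy
        · refine Finset.mem_erase.2 ⟨fun h => hi.2 (h ▸ hy), hsub i hi.1 (Finset.mem_union_left _ hy)⟩
        · rw [Finset.mem_erase] at hy
          exact Finset.mem_erase.2 ⟨hy.1, hsub i hi.1 (Finset.mem_union_right _ hy.2)⟩
      · intro i hi
        rw [Finset.mem_filter] at hi
        rw [← Finset.subset_empty, ← hdisj i hi.1]
        intro y hy
        rw [Finset.mem_inter] at hy ⊢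
        exact ⟨hy.1, (Finset.mem_erase.1 hy.2).2⟩
      · intro i hi j hj hij
        rw [Finset.mem_filter] at hi hj
        obtain ⟨y, hy⟩ := hcross i hi.1 j hj.1 hij
        rw [Finset.mem_inter] at hy
        refine ⟨y, Finset.mem_inter.2 ⟨hy.1, Finset.mem_erase.2 ⟨fun h => hi.2 (h ▸ hy.1), hy.2⟩⟩⟩
    -- sum the per-x inequalities over X
    have hsum : ∑ x ∈ X, ∑ i ∈ s.filter (fun i => x ∉ A i),
        (1 : ℝ) / (((A i).card + ((B i).erase x).card).choose (A i).card : ℝ) ≤ (n : ℝ) := by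
      calc ∑ x ∈ X, ∑ i ∈ s.filter (fun i => x ∉ A i),
            (1 : ℝ) / (((A i).card + ((B i).erase x).card).choose (A i).card : ℝ)
          ≤ ∑ x ∈ X, (1 : ℝ) := Finset.sum_le_sum hper
        _ = (n : ℝ) := by rw [Finset.sum_const, hX]; simp
    -- swap sums
    have hswap : ∑ x ∈ X, ∑ i ∈ s.filter (fun i => x ∉ A i),
        (1 : ℝ) / (((A i).card + ((B i).erase x).card).choose (A i).card : ℝ)
        = ∑ i ∈ s, ∑ x ∈ X.filter (fun x => x ∉ A i),
        (1 : ℝ) / (((A i).card + ((B i).erase x).card).choose (A i).card : ℝ) := by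
      refine Finset.sum_comm' fun x i => ?_
      simp only [Finset.mem_filter]
      tauto
    rw [hswap] at hsum
    -- compute the inner sum for each i ∈ s
    have hinner : ∀ i ∈ s, ∑ x ∈ X.filter (fun x => x ∉ A i),
        (1 : ℝ) / (((A i).card + ((B i).erase x).card).choose (A i).card : ℝ)
        = (n : ℝ) * ((1 : ℝ) / (((A i).card + (B i).card).choose (A i).card : ℝ)) := by
      intro i hi
      have hAX : A i ⊆ X := fun y hy => hsub i hi (Finset.mem_union_left _ hy)
      have hBX : B i ⊆ X := fun y hy => hsub i hi (Finset.mem_union_right _ hy)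
      have hfilter : X.filter (fun x => x ∉ A i) = X \ A i := by
        ext y; simp [Finset.mem_sdiff]
      have hBsub : B i ⊆ X \ A i := by
        intro y hy
        refine Finset.mem_sdiff.2 ⟨hBX hy, fun hyA => ?_⟩
        have : y ∈ A i ∩ B i := Finset.mem_inter.2 ⟨hyA, hy⟩
        rw [hdisj i hi] at this
        simp at this
      rw [hfilter, ← Finset.sum_sdiff hBsub]
      have hb1 : 1 ≤ (B i).card := Finset.card_pos.2 (hBe i hi)
      have h1 : ∀ x ∈ (X \ A i) \ B i,
          (1 : ℝ) / (((A i).card + ((B i).erase x).card).choose (A i).card : ℝ)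
          = (1 : ℝ) / (((A i).card + (B i).card).choose (A i).card : ℝ) := by
        intro x hx
        rw [Finset.mem_sdiff] at hx
        rw [Finset.erase_eq_of_notMem hx.2]
      have h2 : ∀ x ∈ B i,
          (1 : ℝ) / (((A i).card + ((B i).erase x).card).choose (A i).card : ℝ)
          = (1 : ℝ) / (((A i).card + ((B i).card - 1)).choose (A i).card : ℝ) := by
        intro x hx
        rw [Finset.card_erase_of_mem hx]
      rw [Finset.sum_congr rfl h1, Finset.sum_congr rfl h2, Finset.sum_const, Finset.sum_const]
      have hABd : Disjoint (A i) (B i) :=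
        Finset.disjoint_iff_inter_eq_empty.2 (hdisj i hi)
      have hk : (A i).card + (B i).card ≤ n := by
        rw [← Finset.card_union_of_disjoint hABd, ← hX]
        exact Finset.card_le_card (hsub i hi)
      have hcard2 : ((X \ A i) \ B i).card = n - ((A i).card + (B i).card) := by
        have e1 : ((X \ A i) \ B i).card = (X \ A i).card - (B i).card :=
          Finset.card_sdiff_of_subset hBsub
        have e2 : (X \ A i).card = n - (A i).card := by
          rw [Finset.card_sdiff_of_subset hAX, hX]
        omega
      rw [hcard2, nsmul_eq_mul, nsmul_eq_mul]
      have hcast : ((n - ((A i).card + (B i).card) : ℕ) : ℝ)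
          = (n : ℝ) - ((A i).card + (B i).card) := by
        push_cast [Nat.cast_sub hk]
        ring
      rw [hcast]
      have hkey := bollobas_key (A i).card (B i).card hb1
      have hCpos : (0 : ℝ) < (((A i).card + (B i).card).choose (A i).card : ℝ) := by
        exact_mod_cast Nat.choose_pos (Nat.le_add_right _ _)
      have hkey' : ((B i).card : ℝ) * (1 / (((A i).card + ((B i).card - 1)).choose (A i).card : ℝ))
          = (((A i).card : ℝ) + (B i).card) * (1 / (((A i).card + (B i).card).choose (A i).card : ℝ)) := by
        rw [mul_one_div, mul_one_div]
        exact hkey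
      rw [hkey']
      ring
    -- conclude
    have : (n : ℝ) * ∑ i ∈ s, (1 : ℝ) / (((A i).card + (B i).card).choose (A i).card : ℝ) ≤ (n : ℝ) := by
      rw [Finset.mul_sum]
      calc ∑ i ∈ s, (n : ℝ) * ((1 : ℝ) / (((A i).card + (B i).card).choose (A i).card : ℝ))
          = ∑ i ∈ s, ∑ x ∈ X.filter (fun x => x ∉ A i),
            (1 : ℝ) / (((A i).card + ((B i).erase x).card).choose (A i).card : ℝ) :=
            (Finset.sum_congr rfl hinner).symm
        _ ≤ (n : ℝ) := hsum
    have hn' : (0 : ℝ) < (n : ℝ) := by exact_mod_cast hn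
    have := (mul_le_mul_iff_right₀ hn').1 (this.trans_eq (mul_one (n : ℝ)).symm)
    exact this

theorem bollobas_set_pairs {α : Type*} [DecidableEq α] (m : ℕ) (A B : Fin m → Finset α)
    (hdisj : ∀ i, A i ∩ B i = ∅)
    (hcross : ∀ i j, i ≠ j → (A i ∩ B j).Nonempty) :
    ∑ i, (1 : ℝ) / (Nat.choose ((A i).card + (B i).card) ((A i).card) : ℝ) ≤ 1 := by
  classical
  apply bollobas_aux m (Finset.univ.biUnion (fun i => A i ∪ B i)).card
    (Finset.univ.biUnion (fun i => A i ∪ B i)) rfl A B Finset.univ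
  · intro i _
    exact Finset.subset_biUnion_of_mem (fun i => A i ∪ B i) (Finset.mem_univ i)
  · intro i _; exact hdisj i
  · intro i _ j _ hij; exact hcross i j hij
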